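/- For every Borel probability measure G on (0,∞), there exists a Borel probability measure G' supported on the finite set {x_1, ..., x_m, W^{-1}(y_1), ..., W^{-1}(y_n)} such that L(G') ≥ L(G). -/

import Mathlib

open MeasureTheory Finset

/-- For every Borel probability measure `G` on `(0,∞)`, there exists a
Borel probability measure `G'` supported on the finite set
`{x_1, ..., x_m, W⁻¹(y_1), ..., W⁻¹(y_n)}` such that `L(G') ≥ L(G)`, where
`L(G) = ∏_i G({x_i}) · ∏_j ∫_{{v > 0 : W(v) ≥ y_j}} W(v)⁻¹ dG(v)` and
`W⁻¹(y_j) = min{v > 0 : W(v) ≥ y_j}`. -/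
theorem stmt11 (W : ℝ → ℝ) (hWpos : ∀ v : ℝ, 0 < v → 0 < W v)
    (hWmono : MonotoneOn W (Set.Ioi 0))
    (hWrc : ∀ v : ℝ, 0 < v → ContinuousWithinAt W (Set.Ici v) v)
    (m n : ℕ) (hmn : 1 ≤ m + n)
    (x : Fin m → ℝ) (hx : ∀ i, 0 < x i) (y : Fin n → ℝ) (hy : ∀ j, 0 < y j)
    (Winv : Fin n → ℝ)
    (hWinv : ∀ j, IsLeast {v : ℝ | 0 < v ∧ y j ≤ W v} (Winv j))
    (G : Measure ℝ) [IsProbabilityMeasure G] (hG : G (Set.Iic 0) = 0) :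
    ∃ G' : Measure ℝ, IsProbabilityMeasure G' ∧
      G' ((Set.range x ∪ Set.range Winv)ᶜ) = 0 ∧
      (∏ i, G {x i}) *
          (∏ j, ∫⁻ v in {v : ℝ | 0 < v ∧ y j ≤ W v}, ENNReal.ofReal (W v)⁻¹ ∂G)
        ≤ (∏ i, G' {x i}) *
          (∏ j, ∫⁻ v in {v : ℝ | 0 < v ∧ y j ≤ W v}, ENNReal.ofReal (W v)⁻¹ ∂G') := by
  -- positivity of the Winv values
  have hWinvpos : ∀ j, 0 < Winv j := fun j => (hWinv j).1.1
  -- the set {v | 0 < v ∧ y j ≤ W v} equals Ici (Winv j)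
  have hA : ∀ j, {v : ℝ | 0 < v ∧ y j ≤ W v} = Set.Ici (Winv j) := by
    intro j
    ext v
    constructor
    · intro hv
      exact (hWinv j).2 hv
    · intro (hv : Winv j ≤ v)
      have hv0 : 0 < v := lt_of_lt_of_le (hWinvpos j) hv
      refine ⟨hv0, le_trans (hWinv j).1.2 ?_⟩
      exact hWmono (hWinvpos j) hv0 hv
  -- obtain a measurable "projection" g onto the Winv values
  obtain ⟨g, hgmeas, hgS, hgkey⟩ :
      ∃ g : ℝ → ℝ, Measurable g ∧ (∀ v, g v ∈ Set.range x ∪ Set.range Winv) ∧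
        (∀ (j : Fin n) (v : ℝ), Winv j ≤ v →
          g v ∈ Set.range Winv ∧ Winv j ≤ g v ∧ g v ≤ v) := by
    rcases Nat.eq_zero_or_pos n with hn | hn
    · -- no y's: use a constant x value
      have hm : 0 < m := by omega
      refine ⟨fun _ => x ⟨0, hm⟩, measurable_const, fun v => Or.inl ⟨⟨0, hm⟩, rfl⟩, ?_⟩
      intro j; exact absurd j.2 (by omega)
    · -- n ≥ 1 : take the largest Winv value ≤ v, else the smallest Winv value
      set F : Finset ℝ := Finset.image Winv Finset.univ with hF
      have hFne : F.Nonempty := ⟨Winv ⟨0, hn⟩, Finset.mem_image.2 ⟨⟨0, hn⟩, Finset.mem_univ _, rfl⟩⟩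
      set g : ℝ → ℝ := fun v =>
        if h : (F.filter (· ≤ v)).Nonempty then (F.filter (· ≤ v)).max' h else F.min' hFne
        with hg
      have hgF : ∀ v, g v ∈ F := by
        intro v
        rw [hg]
        by_cases h : (F.filter (· ≤ v)).Nonempty
        · simp only [h, dif_pos]
          exact Finset.filter_subset _ _ ((F.filter (· ≤ v)).max'_mem h)
        · simp only [h, dif_neg, not_false_iff]
          exact F.min'_mem hFne
      have hFrange : ∀ a ∈ F, a ∈ Set.range Winv := by
        intro a ha
        rcases Finset.mem_image.1 ha with ⟨k, _, hk⟩
        exact ⟨k, hk⟩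
      have hmono : Monotone g := by
        intro v w hvw
        rw [hg]
        by_cases hv : (F.filter (· ≤ v)).Nonempty
        · have hsub : F.filter (· ≤ v) ⊆ F.filter (· ≤ w) := by
            intro a ha
            rcases Finset.mem_filter.1 ha with ⟨h1, h2⟩
            exact Finset.mem_filter.2 ⟨h1, le_trans h2 hvw⟩
          have hw : (F.filter (· ≤ w)).Nonempty := hv.mono hsub
          simp only [hv, hw, dif_pos]
          exact Finset.max'_subset hv hsub
        · by_cases hw : (F.filter (· ≤ w)).Nonempty
          · simp only [hv, hw, dif_pos, dif_neg, not_false_iff]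
            exact F.min'_le _ (Finset.filter_subset _ _ ((F.filter (· ≤ w)).max'_mem hw))
          · simp only [hv, hw, dif_neg, not_false_iff, le_refl]
      refine ⟨g, hmono.measurable, fun v => Or.inr (hFrange _ (hgF v)), ?_⟩
      intro j v hjv
      have hjF : Winv j ∈ F.filter (· ≤ v) :=
        Finset.mem_filter.2 ⟨Finset.mem_image.2 ⟨j, Finset.mem_univ _, rfl⟩, hjv⟩
      have hne : (F.filter (· ≤ v)).Nonempty := ⟨_, hjF⟩
      have hgv : g v = (F.filter (· ≤ v)).max' hne := by rw [hg]; simp only [hne, dif_pos]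
      refine ⟨hFrange _ (hgF v), ?_, ?_⟩
      · rw [hgv]; exact Finset.le_max' _ _ hjF
      · rw [hgv]
        exact (Finset.mem_filter.1 ((F.filter (· ≤ v)).max'_mem hne)).2
  -- the transport map
  set T : ℝ → ℝ := fun v => if v ∈ Set.range x then v else g v with hT
  have hxmeas : MeasurableSet (Set.range x) := (Set.finite_range x).measurableSet
  have hTmeas : Measurable T := Measurable.ite hxmeas measurable_id hgmeas
  have hTS : ∀ v, T v ∈ Set.range x ∪ Set.range Winv := by
    intro v
    rw [hT]
    by_cases hv : v ∈ Set.range x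
    · simp only [hv, if_pos]; exact Or.inl hv
    · simp only [hv, if_neg, not_false_iff]; exact hgS v
  refine ⟨Measure.map T G, Measure.isProbabilityMeasure_map hTmeas.aemeasurable, ?_, ?_⟩
  · rw [Measure.map_apply hTmeas]
    · convert measure_empty (μ := G)
      ext v
      simp only [Set.mem_preimage, Set.mem_compl_iff, Set.mem_empty_iff_false, iff_false,
        not_not]
      exact hTS v
    · exact ((Set.finite_range x).union (Set.finite_range Winv)).measurableSet.compl
  · refine mul_le_mul' (Finset.prod_le_prod' ?_) (Finset.prod_le_prod' ?_)
    · intro i _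
      rw [Measure.map_apply hTmeas (measurableSet_singleton _)]
      refine measure_mono ?_
      intro v hv
      rcases hv with rfl
      simp only [Set.mem_preimage, Set.mem_singleton_iff, hT]
      rw [if_pos ⟨i, rfl⟩]
    · intro j _
      rw [hA j]
      set c : ℝ := Winv j with hc
      have hc0 : 0 < c := hWinvpos j
      set f : ℝ → ENNReal := fun v => ENNReal.ofReal (W v)⁻¹ with hf
      -- measurability of the indicator integrand
      have hanti : Antitone (fun v : ℝ => ENNReal.ofReal (W (max v c))⁻¹) := by
        intro v w hvw
        have hv0 : 0 < max v c := lt_of_lt_of_le hc0 (le_max_right _ _)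
        have hw0 : 0 < max w c := lt_of_lt_of_le hc0 (le_max_right _ _)
        have hWle : W (max v c) ≤ W (max w c) :=
          hWmono hv0 hw0 (max_le_max hvw le_rfl)
        exact ENNReal.ofReal_le_ofReal
          (inv_anti₀ (hWpos _ hv0) hWle)
      have hind : Measurable ((Set.Ici c).indicator f) := by
        have : (Set.Ici c).indicator f =
            (Set.Ici c).indicator (fun v => ENNReal.ofReal (W (max v c))⁻¹) := by
          ext v
          by_cases hv : v ∈ Set.Ici c
          · rw [Set.indicator_of_mem hv, Set.indicator_of_mem hv, hf]
            rw [max_eq_left hv]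
          · rw [Set.indicator_of_notMem hv, Set.indicator_of_notMem hv]
        rw [this]
        exact hanti.measurable.indicator measurableSet_Ici
      calc ∫⁻ v in Set.Ici c, f v ∂G
          = ∫⁻ v, (Set.Ici c).indicator f v ∂G := (lintegral_indicator measurableSet_Ici f).symm
        _ ≤ ∫⁻ v, (Set.Ici c).indicator f (T v) ∂G := by
            refine lintegral_mono fun v => ?_
            by_cases hv : v ∈ Set.Ici c
            · have hv0 : 0 < v := lt_of_lt_of_le hc0 hv
              rw [hT]
              by_cases hvx : v ∈ Set.range x
              · simp only [hvx, if_pos]; exact le_refl _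
              · simp only [hvx, if_neg, not_false_iff]
                obtain ⟨⟨k, hk⟩, h1, h2⟩ := hgkey j v hv
                have hgIci : g v ∈ Set.Ici c := h1
                rw [Set.indicator_of_mem hv, Set.indicator_of_mem hgIci, hf]
                have hg0 : 0 < g v := lt_of_lt_of_le hc0 h1
                have : W (g v) ≤ W v := hWmono hg0 hv0 h2
                exact ENNReal.ofReal_le_ofReal (inv_anti₀ (hWpos _ hg0) this)
            · rw [Set.indicator_of_notMem hv]
              exact zero_le
        _ = ∫⁻ v, (Set.Ici c).indicator f v ∂(Measure.map T G) :=
            (lintegral_map hind hTmeas).symm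
        _ = ∫⁻ v in Set.Ici c, f v ∂(Measure.map T G) :=
            lintegral_indicator measurableSet_Ici f
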